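/- Horizontal composition of typewriters is well defined: given typewriters M = (M₀, M₁; D_f, D_h; D_CR) and M' = (M₁, M₂; D'_f, D'_h; D'_CR) over chain complexes, with component decompositions D_CR(x,y) = (D_g(y)+D_{fg}(x), D_{gh}(y)+D_{fgh}(x)) and similarly for D'_CR, the tuple M ⋆ M' := (M₀, M₂; D'_f∘D_f, D'_h∘D_h; (D⋆D')_CR) with (D⋆D')_CR having components D*_g := D_g∘D'_g, D*_{fg} := D_g∘D'_{fg}∘D_f, D*_{gh} := D'_h∘D_{gh}∘D'_g, D*_{fgh} := D'_h∘D_{gh}∘D'_{fg}∘D_f, is again a typewriter; i.e., D'_f∘D_f and D'_h∘D_h are chain maps M₀ → M₂ and (D⋆D')_CR : Cone(D'_f∘D_f) → Cone(D'_h∘D_h) is a chain map. -/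

import Mathlib

/-!
STATEMENT 13: Horizontal composition of typewriters is well defined: given
typewriters M = (M₀, M₁; D_f, D_h; D_CR) and M' = (M₁, M₂; D'_f, D'_h; D'_CR)
over chain complexes, the star components define a typewriter
M ⋆ M' = (M₀, M₂; D'_f∘D_f, D'_h∘D_h; (D⋆D')_CR).
-/

open LinearMap

abbrev F2 := ZMod 2

section Defs

variable {P Q P' Q' : Type} [AddCommGroup P] [Module F2 P] [AddCommGroup Q] [Module F2 Q]
  [AddCommGroup P'] [Module F2 P'] [AddCommGroup Q'] [Module F2 Q']

/-- (x,y) ↦ (a x, b y + c x): cone differentials and cone maps. -/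
def bold (a : P →ₗ[F2] P') (b : Q →ₗ[F2] Q') (c : P →ₗ[F2] Q') :
    P × Q →ₗ[F2] P' × Q' :=
  LinearMap.prod (a ∘ₗ LinearMap.fst F2 P Q)
    (b ∘ₗ LinearMap.snd F2 P Q + c ∘ₗ LinearMap.fst F2 P Q)

/-- The cone map with components (D_g, D_{fg}, D_{gh}, D_{fgh}):
(x,y) ↦ (D_g y + D_{fg} x, D_{gh} y + D_{fgh} x). -/
def crMap (Dg : Q →ₗ[F2] P') (Dfg : P →ₗ[F2] P') (Dgh : Q →ₗ[F2] Q')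
    (Dfgh : P →ₗ[F2] Q') : P × Q →ₗ[F2] P' × Q' :=
  LinearMap.prod (Dg ∘ₗ LinearMap.snd F2 P Q + Dfg ∘ₗ LinearMap.fst F2 P Q)
    (Dgh ∘ₗ LinearMap.snd F2 P Q + Dfgh ∘ₗ LinearMap.fst F2 P Q)

end Defs

/-- In an F2-module, a + b = 0 implies a = b. -/
lemma char2_eq {M : Type} [AddCommGroup M] [Module F2 M] {a b : M} (h : a + b = 0) : a = b := by
  have h2 : b + b = 0 := by
    rw [← two_smul F2 b, show (2:F2) = 0 from rfl, zero_smul]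
  calc a = a + (b + b) := by rw [h2, add_zero]
    _ = (a + b) + b := by abel
    _ = b := by rw [h, zero_add]

/-- In an F2-module, 2 • a = 0 (integer smul). -/
lemma char2_two_zsmul {M : Type} [AddCommGroup M] [Module F2 M] (a : M) : (2:ℤ) • a = 0 := by
  rw [two_smul, ← two_smul F2 a, show (2:F2) = 0 from rfl, zero_smul]

/-- In an F2-module, 2 • a = 0 (natural smul). -/
lemma char2_two_nsmul {M : Type} [AddCommGroup M] [Module F2 M] (a : M) : (2:ℕ) • a = 0 := by
  rw [two_smul, ← two_smul F2 a, show (2:F2) = 0 from rfl, zero_smul]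

/-- In an F2-module, a + a = 0. -/
lemma char2_add_self {M : Type} [AddCommGroup M] [Module F2 M] (a : M) : a + a = 0 := by
  rw [← two_smul F2 a, show (2:F2) = 0 from rfl, zero_smul]

theorem stmt13
    {M0 M1 M2 : Type}
    [AddCommGroup M0] [Module F2 M0] [AddCommGroup M1] [Module F2 M1]
    [AddCommGroup M2] [Module F2 M2]
    (d0 : M0 →ₗ[F2] M0) (d1 : M1 →ₗ[F2] M1) (d2 : M2 →ₗ[F2] M2)
    (hd0 : d0 ∘ₗ d0 = 0) (hd1 : d1 ∘ₗ d1 = 0) (hd2 : d2 ∘ₗ d2 = 0)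
    -- the typewriter M = (M₀, M₁; D_f, D_h; D_CR)
    (Df Dh : M0 →ₗ[F2] M1)
    (hDf : d1 ∘ₗ Df + Df ∘ₗ d0 = 0) (hDh : d1 ∘ₗ Dh + Dh ∘ₗ d0 = 0)
    (Dg : M1 →ₗ[F2] M0) (Dfg : M0 →ₗ[F2] M0) (Dgh : M1 →ₗ[F2] M1) (Dfgh : M0 →ₗ[F2] M1)
    (hCR : crMap Dg Dfg Dgh Dfgh ∘ₗ bold d0 d1 Df
        + bold d0 d1 Dh ∘ₗ crMap Dg Dfg Dgh Dfgh = 0)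
    -- the typewriter M' = (M₁, M₂; D'_f, D'_h; D'_CR)
    (Df' Dh' : M1 →ₗ[F2] M2)
    (hDf' : d2 ∘ₗ Df' + Df' ∘ₗ d1 = 0) (hDh' : d2 ∘ₗ Dh' + Dh' ∘ₗ d1 = 0)
    (Dg' : M2 →ₗ[F2] M1) (Dfg' : M1 →ₗ[F2] M1) (Dgh' : M2 →ₗ[F2] M2)
    (Dfgh' : M1 →ₗ[F2] M2)
    (hCR' : crMap Dg' Dfg' Dgh' Dfgh' ∘ₗ bold d1 d2 Df'
        + bold d1 d2 Dh' ∘ₗ crMap Dg' Dfg' Dgh' Dfgh' = 0) :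
    -- M ⋆ M' is a typewriter:
    (d2 ∘ₗ (Df' ∘ₗ Df) + (Df' ∘ₗ Df) ∘ₗ d0 = 0) ∧
    (d2 ∘ₗ (Dh' ∘ₗ Dh) + (Dh' ∘ₗ Dh) ∘ₗ d0 = 0) ∧
    (crMap (Dg ∘ₗ Dg') (Dg ∘ₗ Dfg' ∘ₗ Df) (Dh' ∘ₗ Dgh ∘ₗ Dg')
          (Dh' ∘ₗ Dgh ∘ₗ Dfg' ∘ₗ Df)
        ∘ₗ bold d0 d2 (Df' ∘ₗ Df)
      + bold d0 d2 (Dh' ∘ₗ Dh)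
        ∘ₗ crMap (Dg ∘ₗ Dg') (Dg ∘ₗ Dfg' ∘ₗ Df) (Dh' ∘ₗ Dgh ∘ₗ Dg')
            (Dh' ∘ₗ Dgh ∘ₗ Dfg' ∘ₗ Df) = 0) := by
  -- elementwise forms of the chain-map conditions
  have rf : ∀ t, d1 (Df t) = Df (d0 t) := fun t => char2_eq (by
    have := LinearMap.congr_fun hDf t; simpa using this)
  have rh : ∀ t, d1 (Dh t) = Dh (d0 t) := fun t => char2_eq (by
    have := LinearMap.congr_fun hDh t; simpa using this)
  have rf' : ∀ t, d2 (Df' t) = Df' (d1 t) := fun t => char2_eq (by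
    have := LinearMap.congr_fun hDf' t; simpa using this)
  have rh' : ∀ t, d2 (Dh' t) = Dh' (d1 t) := fun t => char2_eq (by
    have := LinearMap.congr_fun hDh' t; simpa using this)
  -- component equations of D_CR
  have r1 : ∀ t, d0 (Dg t) = Dg (d1 t) := by
    intro t
    have h := LinearMap.congr_fun hCR (0, t)
    simp [crMap, bold, Prod.ext_iff] at h
    apply char2_eq
    rw [← h.1]; abel
  have r2 : ∀ t, d0 (Dfg t) = Dg (Df t) + Dfg (d0 t) := by
    intro t
    have h := LinearMap.congr_fun hCR (t, 0)
    simp [crMap, bold, Prod.ext_iff] at h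
    apply char2_eq
    rw [← h.1]; abel
  have r3 : ∀ t, d1 (Dgh t) = Dgh (d1 t) + Dh (Dg t) := by
    intro t
    have h := LinearMap.congr_fun hCR (0, t)
    simp [crMap, bold, Prod.ext_iff] at h
    apply char2_eq
    rw [← h.2]; abel
  have r4 : ∀ t, d1 (Dfgh t) = Dgh (Df t) + Dfgh (d0 t) + Dh (Dfg t) := by
    intro t
    have h := LinearMap.congr_fun hCR (t, 0)
    simp [crMap, bold, Prod.ext_iff] at h
    apply char2_eq
    rw [← h.2]; abel
  -- component equations of D'_CR
  have r1' : ∀ t, d1 (Dg' t) = Dg' (d2 t) := by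
    intro t
    have h := LinearMap.congr_fun hCR' (0, t)
    simp [crMap, bold, Prod.ext_iff] at h
    apply char2_eq
    rw [← h.1]; abel
  have r2' : ∀ t, d1 (Dfg' t) = Dg' (Df' t) + Dfg' (d1 t) := by
    intro t
    have h := LinearMap.congr_fun hCR' (t, 0)
    simp [crMap, bold, Prod.ext_iff] at h
    apply char2_eq
    rw [← h.1]; abel
  have r3' : ∀ t, d2 (Dgh' t) = Dgh' (d2 t) + Dh' (Dg' t) := by
    intro t
    have h := LinearMap.congr_fun hCR' (0, t)
    simp [crMap, bold, Prod.ext_iff] at h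
    apply char2_eq
    rw [← h.2]; abel
  refine ⟨?_, ?_, ?_⟩
  · ext x
    simp only [LinearMap.add_apply, LinearMap.comp_apply, LinearMap.zero_apply, rf', rf]
    abel_nf
    simp [char2_two_zsmul, char2_two_nsmul, char2_add_self]
  · ext x
    simp only [LinearMap.add_apply, LinearMap.comp_apply, LinearMap.zero_apply, rh', rh]
    abel_nf
    simp [char2_two_zsmul, char2_two_nsmul, char2_add_self]
  · apply LinearMap.ext
    rintro ⟨x, y⟩
    simp only [crMap, bold, Prod.ext_iff, LinearMap.add_apply, LinearMap.comp_apply,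
      LinearMap.prod_apply, Function.prod_apply, LinearMap.fst_apply, LinearMap.snd_apply,
      LinearMap.zero_apply, Prod.fst_zero, Prod.snd_zero, map_add]
    constructor
    · simp only [r1, r2', r1', rf, map_add]
      abel_nf
      simp [char2_two_zsmul, char2_two_nsmul, char2_add_self]
    · simp only [rh', r3, r2', r1', rf, map_add]
      abel_nf
      simp [char2_two_zsmul, char2_two_nsmul, char2_add_self]
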